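/- Let c > 0 and suppose H(u) = u − c·A(u) where A(u) = u·Σ_k min_{x∈[x_k, x_{k+1}]} f_β(√(u²+x²))·w_k with f_β(t)=tanh((β/2)t)/t and all x_k ≥ 0, w_k > 0. If β·c·Σ_k w_k/2 < 1, then H is strictly increasing on [0,∞) and H(u) = s has at most one nonnegative solution for each s ≥ 0. -/

import Mathlib

/-- `sinh t ≤ t * cosh t` for `t ≥ 0`. -/
lemma aux_sinh_le (t : ℝ) (ht : 0 ≤ t) : Real.sinh t ≤ t * Real.cosh t := by
  have hmono : MonotoneOn (fun s : ℝ => s * Real.cosh s - Real.sinh s) (Set.Ici 0) := by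
    have hd : ∀ s : ℝ, HasDerivAt (fun s : ℝ => s * Real.cosh s - Real.sinh s)
        (s * Real.sinh s) s := by
      intro s
      have h : HasDerivAt (fun s : ℝ => s * Real.cosh s - Real.sinh s) _ s :=
        ((hasDerivAt_id' s).mul (Real.hasDerivAt_cosh s)).sub (Real.hasDerivAt_sinh s)
      convert h using 1
      ring
    apply monotoneOn_of_deriv_nonneg (convex_Ici 0)
    · exact ((continuous_id.mul Real.continuous_cosh).sub Real.continuous_sinh).continuousOn
    · intro s _
      exact (hd s).differentiableAt.differentiableWithinAt
    · intro s hs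
      rw [(hd s).deriv]
      rw [interior_Ici] at hs
      exact mul_nonneg (le_of_lt hs) (Real.sinh_nonneg_iff.mpr (le_of_lt hs))
  have h0 : (0 : ℝ) ∈ Set.Ici (0 : ℝ) := Set.mem_Ici.mpr le_rfl
  have := hmono h0 (Set.mem_Ici.mpr ht) ht
  simp at this
  linarith

/-- `p * sinh q ≤ q * sinh p` for `0 ≤ q ≤ p`. -/
lemma aux_sinh_ratio (p q : ℝ) (hq : 0 ≤ q) (hqp : q ≤ p) :
    p * Real.sinh q ≤ q * Real.sinh p := by
  rcases eq_or_lt_of_le hq with h | hq0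
  · simp [← h]
  have hp0 : 0 < p := lt_of_lt_of_le hq0 hqp
  have hmono : MonotoneOn (fun s : ℝ => Real.sinh s / s) (Set.Ioi 0) := by
    apply monotoneOn_of_deriv_nonneg (convex_Ioi 0)
    · exact Real.continuous_sinh.continuousOn.div continuousOn_id
        (fun s hs => ne_of_gt hs)
    · intro s hs
      rw [interior_Ioi] at hs
      exact (((Real.hasDerivAt_sinh s).div (hasDerivAt_id' s)
        (ne_of_gt hs)).differentiableAt).differentiableWithinAt
    · intro s hs
      rw [interior_Ioi] at hs
      have hd := (Real.hasDerivAt_sinh s).div (hasDerivAt_id' s) (ne_of_gt hs)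
      rw [show (fun s : ℝ => Real.sinh s / s) = (Real.sinh / fun x => x) from rfl, hd.deriv]
      have hs' : (0:ℝ) < s := hs
      have := aux_sinh_le s (le_of_lt hs')
      have hs2 : (0:ℝ) < s ^ 2 := by positivity
      apply div_nonneg _ (le_of_lt hs2)
      nlinarith
  have := hmono (Set.mem_Ioi.mpr hq0) (Set.mem_Ioi.mpr hp0) hqp
  rw [div_le_div_iff₀ hq0 hp0] at this
  linarith

/-- `a * tanh b ≤ b * tanh a` for `0 ≤ a ≤ b`. -/
lemma aux_tanh (a b : ℝ) (ha : 0 ≤ a) (hab : a ≤ b) :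
    a * Real.tanh b ≤ b * Real.tanh a := by
  have hcb := Real.cosh_pos b
  have hca := Real.cosh_pos a
  rw [Real.tanh_eq_sinh_div_cosh, Real.tanh_eq_sinh_div_cosh, ← mul_div_assoc, ← mul_div_assoc,
    div_le_div_iff₀ hcb hca]
  have key := aux_sinh_ratio (a + b) (b - a) (by linarith) (by linarith)
  rw [Real.sinh_sub, Real.sinh_add] at key
  nlinarith

theorem H_strictMono_unique_solution (β c : ℝ) (hβ : 0 < β) (hc : 0 < c)
    (N : ℕ) (x : ℕ → ℝ) (hx0 : 0 ≤ x 0)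
    (hxmono : ∀ k < N, x k < x (k + 1))
    (f : ℝ → ℝ) (hf : ∀ t : ℝ, f t = if t = 0 then β / 2 else Real.tanh (β / 2 * t) / t)
    (A H : ℝ → ℝ)
    (hA : ∀ u : ℝ, A u = u * ∑ k ∈ Finset.range N,
        sInf ((fun y : ℝ => f (Real.sqrt (u ^ 2 + y ^ 2))) '' Set.Icc (x k) (x (k + 1)))
          * (x (k + 1) - x k))
    (hH : ∀ u : ℝ, H u = u - c * A u)
    (hsmall : β * c * (∑ k ∈ Finset.range N, (x (k + 1) - x k)) / 2 < 1) :
    StrictMonoOn H (Set.Ici 0) ∧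
      ∀ s : ℝ, 0 ≤ s → ∀ u₁ u₂ : ℝ, 0 ≤ u₁ → 0 ≤ u₂ → H u₁ = s → H u₂ = s → u₁ = u₂ := by
  -- basic properties of f
  have hf_nonneg : ∀ t : ℝ, 0 ≤ t → 0 ≤ f t := by
    intro t ht
    rw [hf]
    split_ifs with h
    · positivity
    · have ht' : 0 < t := lt_of_le_of_ne ht (Ne.symm h)
      have : 0 ≤ Real.tanh (β / 2 * t) := by
        rw [Real.tanh_eq_sinh_div_cosh]
        exact div_nonneg (Real.sinh_nonneg_iff.mpr (by positivity)) (Real.cosh_pos _).le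
      positivity
  have hf_le : ∀ t : ℝ, 0 ≤ t → f t ≤ β / 2 := by
    intro t ht
    rw [hf]
    split_ifs with h
    · exact le_refl _
    · have ht' : 0 < t := lt_of_le_of_ne ht (Ne.symm h)
      rw [div_le_iff₀ ht', Real.tanh_eq_sinh_div_cosh,
        div_le_iff₀ (Real.cosh_pos _)]
      have := aux_sinh_le (β / 2 * t) (by positivity)
      nlinarith
  have hf_anti : ∀ s t : ℝ, 0 ≤ s → s ≤ t → f t ≤ f s := by
    intro s t hs hst
    rcases eq_or_lt_of_le hs with h | hs0
    · rw [hf s, ← h]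
      simp only [if_pos rfl]
      exact hf_le t (by linarith)
    · have ht0 : 0 < t := lt_of_lt_of_le hs0 hst
      rw [hf s, hf t, if_neg (ne_of_gt hs0), if_neg (ne_of_gt ht0)]
      rw [div_le_div_iff₀ ht0 hs0]
      have key := aux_tanh (β / 2 * s) (β / 2 * t) (by positivity)
        (by nlinarith)
      nlinarith
  -- properties of the infima
  set g : ℝ → ℝ → ℝ := fun u y => f (Real.sqrt (u ^ 2 + y ^ 2)) with hg
  have hne : ∀ (u : ℝ) (k : ℕ), k < N → (g u '' Set.Icc (x k) (x (k + 1))).Nonempty := by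
    intro u k hk
    exact (Set.nonempty_Icc.mpr (hxmono k hk).le).image _
  have hbdd : ∀ (u : ℝ) (k : ℕ), BddBelow (g u '' Set.Icc (x k) (x (k + 1))) := by
    intro u k
    refine ⟨0, ?_⟩
    rintro z ⟨y, _, rfl⟩
    exact hf_nonneg _ (Real.sqrt_nonneg _)
  have hInf_nonneg : ∀ (u : ℝ) (k : ℕ), k < N →
      0 ≤ sInf (g u '' Set.Icc (x k) (x (k + 1))) := by
    intro u k hk
    apply le_csInf (hne u k hk)
    rintro z ⟨y, _, rfl⟩
    exact hf_nonneg _ (Real.sqrt_nonneg _)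
  have hInf_le : ∀ (u : ℝ) (k : ℕ), k < N →
      sInf (g u '' Set.Icc (x k) (x (k + 1))) ≤ β / 2 := by
    intro u k hk
    refine le_trans (csInf_le (hbdd u k) ⟨x k, ?_, rfl⟩) (hf_le _ (Real.sqrt_nonneg _))
    exact ⟨le_refl _, (hxmono k hk).le⟩
  have hInf_mono : ∀ (u v : ℝ) (k : ℕ), k < N → 0 ≤ u → u ≤ v →
      sInf (g v '' Set.Icc (x k) (x (k + 1))) ≤ sInf (g u '' Set.Icc (x k) (x (k + 1))) := by
    intro u v k hk hu huv
    apply le_csInf (hne u k hk)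
    rintro z ⟨y, hy, rfl⟩
    refine le_trans (csInf_le (hbdd v k) ⟨y, hy, rfl⟩) ?_
    apply hf_anti _ _ (Real.sqrt_nonneg _)
    apply Real.sqrt_le_sqrt
    nlinarith
  -- strict monotonicity
  have hmain : StrictMonoOn H (Set.Ici 0) := by
    intro a ha b hb hab
    have ha' : (0:ℝ) ≤ a := ha
    have hb' : (0:ℝ) ≤ b := hb
    have step1 : (∑ k ∈ Finset.range N, sInf (g b '' Set.Icc (x k) (x (k + 1))) * (x (k+1) - x k))
        ≤ ∑ k ∈ Finset.range N, sInf (g a '' Set.Icc (x k) (x (k + 1))) * (x (k+1) - x k) := by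
      apply Finset.sum_le_sum
      intro k hk
      have hk' := Finset.mem_range.mp hk
      exact mul_le_mul_of_nonneg_right (hInf_mono a b k hk' ha' hab.le)
        (sub_nonneg.mpr (hxmono k hk').le)
    have step2 : (∑ k ∈ Finset.range N, sInf (g a '' Set.Icc (x k) (x (k + 1))) * (x (k+1) - x k))
        ≤ (β / 2) * ∑ k ∈ Finset.range N, (x (k+1) - x k) := by
      rw [Finset.mul_sum]
      apply Finset.sum_le_sum
      intro k hk
      have hk' := Finset.mem_range.mp hk
      exact mul_le_mul_of_nonneg_right (hInf_le a k hk')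
        (sub_nonneg.mpr (hxmono k hk').le)
    have hSa := hA a
    have hSb := hA b
    have hSnonneg : 0 ≤ ∑ k ∈ Finset.range N,
        sInf (g a '' Set.Icc (x k) (x (k + 1))) * (x (k+1) - x k) := by
      apply Finset.sum_nonneg
      intro k hk
      have hk' := Finset.mem_range.mp hk
      exact mul_nonneg (hInf_nonneg a k hk') (sub_nonneg.mpr (hxmono k hk').le)
    have hkey : A b - A a ≤ (b - a) * ((β / 2) *
        ∑ k ∈ Finset.range N, (x (k+1) - x k)) := by
      rw [hSa, hSb]
      have h1 : b * (∑ k ∈ Finset.range N,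
            sInf (g b '' Set.Icc (x k) (x (k + 1))) * (x (k+1) - x k))
          ≤ b * (∑ k ∈ Finset.range N,
            sInf (g a '' Set.Icc (x k) (x (k + 1))) * (x (k+1) - x k)) :=
        mul_le_mul_of_nonneg_left step1 hb'
      nlinarith [sub_pos.mpr hab]
    have hfin : c * (A b - A a) < b - a := by
      have h2 : c * (A b - A a) ≤ c * ((b - a) * ((β / 2) *
          ∑ k ∈ Finset.range N, (x (k+1) - x k))) :=
        mul_le_mul_of_nonneg_left hkey hc.le
      nlinarith [sub_pos.mpr hab]
    rw [hH a, hH b]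
    linarith
  refine ⟨hmain, ?_⟩
  intro s _ u₁ u₂ h1 h2 hH1 hH2
  exact hmain.injOn (Set.mem_Ici.mpr h1) (Set.mem_Ici.mpr h2) (by rw [hH1, hH2])
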